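/- Consider the two-state Markov chain on 𝕏 = {1,2} with transition probabilities P(X_{t+1}=1 | X_t=1) = P(X_{t+1}=2 | X_t=1) = 1/2 and P(X_{t+1}=2 | X_t=2) = 1, and payoff f(x) = x. If the discount function δ : ℕ → [0,1] is strictly decreasing with δ(0) = 1, δ(1) = 3/4, lim_{k→∞} δ(k) = 0, and satisfies 3/4 + 2·Σ_{k=2}^∞ (1/2)^k δ(k) < 1, then there exists no equilibrium: no Borel set S ⊆ {1,2} satisfies Θ(S) = S. -/

import Mathlib

open MeasureTheory ProbabilityTheory Set Filter Topology
open scoped ENNReal ENat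

set_option linter.unusedSectionVars false
set_option maxHeartbeats 1000000
noncomputable section

/-- The σ-algebra generated by the first `n+1` coordinates of the path space:
the natural filtration of the coordinate process at time `n`. -/
def pathSigma (𝕏 : Type*) [m : MeasurableSpace 𝕏] (n : ℕ) : MeasurableSpace (ℕ → 𝕏) :=
  ⨆ i ∈ Finset.range (n + 1), MeasurableSpace.comap (fun ω : ℕ → 𝕏 => ω i) m

/-- `Pr` is the family of laws of the time-homogeneous Markov chain with one-step
transition kernel `Q`: under `Pr x` the chain starts at `x`, and the Markov property
`Pr^x(X_{n+1} ∈ A | 𝓕_n) = Q(X_n, A)` holds. -/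
structure IsMarkovChainLaw {𝕏 : Type*} [MeasurableSpace 𝕏]
    (Pr : Kernel 𝕏 (ℕ → 𝕏)) (Q : Kernel 𝕏 𝕏) : Prop where
  start : ∀ x : 𝕏, Pr x {ω | ω 0 = x} = 1
  markov : ∀ (x : 𝕏) (n : ℕ) (B : Set (ℕ → 𝕏)), MeasurableSet[pathSigma 𝕏 n] B →
    ∀ A : Set 𝕏, MeasurableSet A →
      Pr x (B ∩ {ω | ω (n + 1) ∈ A}) = ∫⁻ ω in B, Q (ω n) A ∂(Pr x)

/-- The first hitting time `ρ(x,S) = inf {t ≥ 1 : X_t ∈ S}` along the path `ω`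
(equal to `⊤` if `S` is never reached at a time `≥ 1`). -/
def hitTime {𝕏 : Type*} (S : Set 𝕏) (ω : ℕ → 𝕏) : ℕ∞ :=
  sInf {n : ℕ∞ | ∃ t : ℕ, n = (t : ℕ∞) ∧ 1 ≤ t ∧ ω t ∈ S}

/-- The discounted payoff `δ(ρ(x,S)) f(X_{ρ(x,S)})` collected along the path `ω`,
with the convention that it vanishes when `S` is never hit. -/
def stopPayoff {𝕏 : Type*} (δ : ℕ → ℝ) (f : 𝕏 → ℝ) (S : Set 𝕏) (ω : ℕ → 𝕏) : ℝ :=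
  if hitTime S ω = ⊤ then 0
  else δ (hitTime S ω).toNat * f (ω (hitTime S ω).toNat)

/-- The objective value `J(x, ρ(x,S)) = 𝔼^x[δ(ρ(x,S)) f(X_{ρ(x,S)})]`. -/
def valJ {𝕏 : Type*} [MeasurableSpace 𝕏] (Pr : Kernel 𝕏 (ℕ → 𝕏)) (δ : ℕ → ℝ) (f : 𝕏 → ℝ)
    (S : Set 𝕏) (x : 𝕏) : ℝ :=
  ∫ ω, stopPayoff δ f S ω ∂(Pr x)

/-- The operator `Θ(S) = {x ∈ 𝕏 : f(x) ≥ J(x, ρ(x,S))}`. -/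
def Θ {𝕏 : Type*} [MeasurableSpace 𝕏] (Pr : Kernel 𝕏 (ℕ → 𝕏)) (δ : ℕ → ℝ) (f : 𝕏 → ℝ)
    (S : Set 𝕏) : Set 𝕏 :=
  {x | valJ Pr δ f S x ≤ f x}

/-- A Borel set `S ⊆ 𝕏` is an equilibrium if `Θ(S) = S`. -/
def IsEquilibrium {𝕏 : Type*} [MeasurableSpace 𝕏] (Pr : Kernel 𝕏 (ℕ → 𝕏)) (δ : ℕ → ℝ)
    (f : 𝕏 → ℝ) (S : Set 𝕏) : Prop :=
  MeasurableSet S ∧ Θ Pr δ f S = S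

/-- The value `V(x,S) = max (f x) (J(x, ρ(x,S)))` associated with an equilibrium `S`. -/
def valV {𝕏 : Type*} [MeasurableSpace 𝕏] (Pr : Kernel 𝕏 (ℕ → 𝕏)) (δ : ℕ → ℝ) (f : 𝕏 → ℝ)
    (S : Set 𝕏) (x : 𝕏) : ℝ :=
  max (f x) (valJ Pr δ f S x)

lemma hitTime_eq_top_iff {𝕏 : Type*} (S : Set 𝕏) (ω : ℕ → 𝕏) :
    hitTime S ω = ⊤ ↔ ∀ t : ℕ, 1 ≤ t → ω t ∉ S := by
  rw [hitTime, sInf_eq_top]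
  constructor
  · intro h t ht hmem
    exact (WithTop.coe_ne_top (h _ ⟨t, rfl, ht, hmem⟩)).elim
  · rintro h n ⟨t, rfl, ht, hmem⟩
    exact absurd hmem (h t ht)

lemma hitTime_eq_coe_iff {𝕏 : Type*} (S : Set 𝕏) (ω : ℕ → 𝕏) (k : ℕ) :
    hitTime S ω = (k : ℕ∞) ↔ 1 ≤ k ∧ ω k ∈ S ∧ ∀ t : ℕ, 1 ≤ t → t < k → ω t ∉ S := by
  constructor
  · intro h
    have hne : {n : ℕ∞ | ∃ t : ℕ, n = (t : ℕ∞) ∧ 1 ≤ t ∧ ω t ∈ S}.Nonempty := by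
      by_contra hc
      rw [Set.not_nonempty_iff_eq_empty] at hc
      rw [hitTime, hc, sInf_empty] at h
      exact (WithTop.coe_ne_top h.symm).elim
    have hmem := csInf_mem hne
    rw [← hitTime, h] at hmem
    obtain ⟨t, ht, h1, hS⟩ := hmem
    have : t = k := by exact_mod_cast ht.symm
    subst this
    refine ⟨h1, hS, fun s hs1 hsk hsS => ?_⟩
    have : hitTime S ω ≤ (s : ℕ∞) := sInf_le ⟨s, rfl, hs1, hsS⟩
    rw [h] at this
    exact absurd (by exact_mod_cast this) (Nat.not_le.mpr hsk)
  · rintro ⟨h1, hS, hmin⟩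
    refine le_antisymm (sInf_le ⟨k, rfl, h1, hS⟩) (le_sInf ?_)
    rintro n ⟨t, rfl, ht1, htS⟩
    have : k ≤ t := by
      by_contra hc
      push_neg at hc
      exact hmin t ht1 hc htS
    exact_mod_cast this


lemma pathSigma_le (n : ℕ) : pathSigma ℕ n ≤ (inferInstance : MeasurableSpace (ℕ → ℕ)) := by
  refine iSup₂_le fun i _ => ?_
  exact (measurable_pi_apply i).comap_le

lemma measurableSet_coord {n i : ℕ} (h : i ≤ n) (A : Set ℕ) :
    MeasurableSet[pathSigma ℕ n] {ω : ℕ → ℕ | ω i ∈ A} := by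
  have h1 : MeasurableSpace.comap (fun ω : ℕ → ℕ => ω i) ⊤ ≤ pathSigma ℕ n := by
    refine le_iSup₂ (f := fun i (_ : i ∈ Finset.range (n+1)) =>
      MeasurableSpace.comap (fun ω : ℕ → ℕ => ω i) ⊤) i ?_
    exact Finset.mem_range.mpr (Nat.lt_succ_of_le h)
  exact h1 _ ⟨A, trivial, rfl⟩

-- key step lemma
lemma step_lemma {Pr : Kernel ℕ (ℕ → ℕ)} {Q : Kernel ℕ ℕ} (hchain : IsMarkovChainLaw Pr Q)
    (x n : ℕ) (B : Set (ℕ → ℕ)) (hB : MeasurableSet[pathSigma ℕ n] B)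
    (y : ℕ) (hBy : ∀ ω ∈ B, ω n = y) (A : Set ℕ) :
    Pr x (B ∩ {ω | ω (n + 1) ∈ A}) = Q y A * Pr x B := by
  rw [hchain.markov x n B hB A trivial]
  rw [setLIntegral_congr_fun (pathSigma_le n B hB)
    (fun ω (hω : ω ∈ B) => by rw [hBy ω hω])]
  simp [setLIntegral_const]

lemma step_lemma' {Pr : Kernel ℕ (ℕ → ℕ)} {Q : Kernel ℕ ℕ} (hchain : IsMarkovChainLaw Pr Q)
    (x n : ℕ) (B : Set (ℕ → ℕ)) (hB : MeasurableSet[pathSigma ℕ n] B)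
    (c : ℝ≥0∞) (A : Set ℕ) (hBy : ∀ ω ∈ B, Q (ω n) A = c) :
    Pr x (B ∩ {ω | ω (n + 1) ∈ A}) = c * Pr x B := by
  rw [hchain.markov x n B hB A trivial]
  rw [setLIntegral_congr_fun (pathSigma_le n B hB)
    (fun ω (hω : ω ∈ B) => hBy ω hω)]
  simp [setLIntegral_const]

lemma ae_of_meas_one {μ : Measure (ℕ → ℕ)} [IsProbabilityMeasure μ] {A : Set (ℕ → ℕ)}
    (hA : MeasurableSet A) (h : μ A = 1) : ∀ᵐ ω ∂μ, ω ∈ A := by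
  have : μ Aᶜ = 0 := by
    rw [measure_compl hA (measure_ne_top μ A), h, measure_univ]; simp
  exact measure_eq_zero_iff_ae_notMem.mp this |>.mono (fun ω h => not_not.mp h)

lemma meas_one_of_ae {μ : Measure (ℕ → ℕ)} [IsProbabilityMeasure μ] {A : Set (ℕ → ℕ)}
    (hA : MeasurableSet A) (h : ∀ᵐ ω ∂μ, ω ∈ A) : μ A = 1 :=
  (mem_ae_iff_prob_eq_one hA).mp h

def constSet (x j : ℕ) : Set (ℕ → ℕ) := {ω | ∀ t ≤ j, ω t = x}

lemma constSet_measurable (x j : ℕ) : MeasurableSet[pathSigma ℕ j] (constSet x j) := by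
  have : constSet x j = ⋂ t, ⋂ (_ : t ≤ j), {ω : ℕ → ℕ | ω t ∈ ({x} : Set ℕ)} := by
    ext ω; simp [constSet]
  rw [this]
  exact MeasurableSet.iInter fun t => MeasurableSet.iInter fun ht => measurableSet_coord ht _

lemma constSet_succ (x j : ℕ) :
    constSet x (j + 1) = constSet x j ∩ {ω | ω (j + 1) ∈ ({x} : Set ℕ)} := by
  ext ω
  constructor
  · intro h
    exact ⟨fun t ht => h t (ht.trans (Nat.le_succ j)), h (j + 1) le_rfl⟩
  · rintro ⟨h1, h2⟩ t ht
    rcases Nat.le_succ_iff.mp ht with h | h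
    · exact h1 t h
    · rw [h]; exact h2

lemma constSet_zero (x : ℕ) : constSet x 0 = {ω : ℕ → ℕ | ω 0 = x} := by
  ext ω; simp [constSet]

section Chain
variable {Pr : Kernel ℕ (ℕ → ℕ)} {Q : Kernel ℕ ℕ} [IsMarkovKernel Pr] [IsMarkovKernel Q]
  (hchain : IsMarkovChainLaw Pr Q)
  (hQ1 : Q 1 = (1 / 2 : ℝ≥0∞) • Measure.dirac 1 + (1 / 2 : ℝ≥0∞) • Measure.dirac 2)
  (hQ2 : Q 2 = Measure.dirac 2)

include hQ1 in
lemma Q1_one : Q 1 {1} = 1 / 2 := by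
  simp [hQ1, Measure.dirac_apply]

include hQ1 in
lemma Q1_two : Q 1 {2} = 1 / 2 := by
  simp [hQ1, Measure.dirac_apply, Set.indicator]

include hQ1 in
lemma Q1_both : Q 1 {1, 2} = 1 := by
  rw [hQ1]
  simp [Measure.dirac_apply, Set.indicator]
  rw [ENNReal.inv_two_add_inv_two]

include hQ2 in
lemma Q2_two : Q 2 {2} = 1 := by simp [hQ2, Measure.dirac_apply]

include hQ2 in
lemma Q2_both : Q 2 {1, 2} = 1 := by
  simp [hQ2, Measure.dirac_apply, Set.indicator]

include hchain hQ2 in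
lemma const2_measure (j : ℕ) : Pr 2 (constSet 2 j) = 1 := by
  induction j with
  | zero => rw [constSet_zero]; exact hchain.start 2
  | succ j ih =>
      rw [constSet_succ, step_lemma' hchain 2 j _ (constSet_measurable 2 j) 1 {2}
        (fun ω hω => by rw [hω j le_rfl]; exact Q2_two hQ2), ih, one_mul]

include hchain hQ1 in
lemma const1_measure (j : ℕ) : Pr 1 (constSet 1 j) = (1 / 2) ^ j := by
  induction j with
  | zero => rw [constSet_zero, pow_zero]; exact hchain.start 1
  | succ j ih =>
      rw [constSet_succ, step_lemma' hchain 1 j _ (constSet_measurable 1 j) (1 / 2) {1}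
        (fun ω hω => by rw [hω j le_rfl]; exact Q1_one hQ1), ih, pow_succ, mul_comm]

include hchain hQ1 in
lemma hitF_measure (k : ℕ) :
    Pr 1 (constSet 1 k ∩ {ω | ω (k + 1) ∈ ({2} : Set ℕ)}) = (1 / 2) ^ (k + 1) := by
  rw [step_lemma' hchain 1 k _ (constSet_measurable 1 k) (1 / 2) {2}
    (fun ω hω => by rw [hω k le_rfl]; exact Q1_two hQ1), const1_measure hchain hQ1,
    pow_succ, mul_comm]

def GSet (j : ℕ) : Set (ℕ → ℕ) := {ω | ω 0 = 1 ∧ ∀ t ≤ j, ω t ∈ ({1, 2} : Set ℕ)}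

lemma GSet_measurable (j : ℕ) : MeasurableSet[pathSigma ℕ j] (GSet j) := by
  have : GSet j = {ω : ℕ → ℕ | ω 0 ∈ ({1} : Set ℕ)} ∩
      ⋂ t, ⋂ (_ : t ≤ j), {ω : ℕ → ℕ | ω t ∈ ({1, 2} : Set ℕ)} := by
    ext ω; simp [GSet]
  rw [this]
  exact (measurableSet_coord (Nat.zero_le j) _).inter
    (MeasurableSet.iInter fun t => MeasurableSet.iInter fun ht => measurableSet_coord ht _)

lemma GSet_zero : GSet 0 = {ω : ℕ → ℕ | ω 0 = 1} := by
  ext ω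
  simp only [GSet, Set.mem_setOf_eq, Nat.le_zero, forall_eq]
  exact ⟨fun h => h.1, fun h => ⟨h, by rw [h]; exact Set.mem_insert 1 {2}⟩⟩

lemma GSet_succ (j : ℕ) :
    GSet (j + 1) = GSet j ∩ {ω | ω (j + 1) ∈ ({1, 2} : Set ℕ)} := by
  ext ω
  constructor
  · rintro ⟨h0, h⟩
    exact ⟨⟨h0, fun t ht => h t (ht.trans (Nat.le_succ j))⟩, h (j + 1) le_rfl⟩
  · rintro ⟨⟨h0, h1⟩, h2⟩
    refine ⟨h0, fun t ht => ?_⟩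
    rcases Nat.le_succ_iff.mp ht with h | h
    · exact h1 t h
    · rw [h]; exact h2

include hchain hQ1 hQ2 in
lemma GSet_measure (j : ℕ) : Pr 1 (GSet j) = 1 := by
  induction j with
  | zero => rw [GSet_zero]; exact hchain.start 1
  | succ j ih =>
      rw [GSet_succ, step_lemma' hchain 1 j _ (GSet_measurable j) 1 {1, 2}
        (fun ω hω => ?_), ih, one_mul]
      rcases hω.2 j le_rfl with h | h
      · rw [Set.mem_singleton_iff.mp h]; exact Q1_both hQ1
      · rw [Set.mem_singleton_iff.mp h]; exact Q2_both hQ2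

include hchain hQ2 in
lemma ae_two : ∀ᵐ ω ∂(Pr 2), ∀ t, ω t = 2 := by
  have h : ∀ j, ∀ᵐ ω ∂(Pr 2), ω ∈ constSet 2 j := fun j =>
    ae_of_meas_one (pathSigma_le j _ (constSet_measurable 2 j)) (const2_measure hchain hQ2 j)
  filter_upwards [ae_all_iff.mpr h] with ω hω t
  exact hω t t le_rfl

include hchain hQ1 hQ2 in
lemma ae_one : ∀ᵐ ω ∂(Pr 1), ω 0 = 1 ∧ ∀ t, ω t ∈ ({1, 2} : Set ℕ) := by
  have h : ∀ j, ∀ᵐ ω ∂(Pr 1), ω ∈ GSet j := fun j =>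
    ae_of_meas_one (pathSigma_le j _ (GSet_measurable j)) (GSet_measure hchain hQ1 hQ2 j)
  filter_upwards [ae_all_iff.mpr h] with ω hω
  exact ⟨(hω 0).1, fun t => (hω t).2 t le_rfl⟩

include hchain hQ1 hQ2 in
lemma hit_measure (k : ℕ) :
    Pr 1 {ω | hitTime ({2} : Set ℕ) ω = ((k + 1 : ℕ) : ℕ∞)} = (1 / 2) ^ (k + 1) := by
  rw [← hitF_measure hchain hQ1 k]
  apply measure_congr
  rw [eventuallyEq_set]
  filter_upwards [ae_one hchain hQ1 hQ2] with ω hω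
  obtain ⟨h0, hall⟩ := hω
  show hitTime {2} ω = ((k + 1 : ℕ) : ℕ∞) ↔ ω ∈ constSet 1 k ∩ {ω | ω (k + 1) ∈ ({2} : Set ℕ)}
  rw [hitTime_eq_coe_iff]
  constructor
  · rintro ⟨-, hS, hmin⟩
    refine ⟨fun t ht => ?_, hS⟩
    rcases Nat.eq_zero_or_pos t with h | h
    · rw [h]; exact h0
    · rcases hall t with h1 | h2
      · exact h1
      · exact absurd h2 (hmin t h (Nat.lt_succ_of_le ht))
  · rintro ⟨hc, h2⟩
    refine ⟨Nat.succ_le_succ (Nat.zero_le k), h2, fun t ht1 htk => ?_⟩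
    rw [hc t (Nat.lt_succ_iff.mp htk)]
    simp

lemma measurableSet_hitEq (S : Set ℕ) (k : ℕ) :
    MeasurableSet {ω : ℕ → ℕ | hitTime S ω = ((k + 1 : ℕ) : ℕ∞)} := by
  have : {ω : ℕ → ℕ | hitTime S ω = ((k + 1 : ℕ) : ℕ∞)} =
      ((fun ω : ℕ → ℕ => ω (k + 1)) ⁻¹' S) ∩
        ⋂ t, ⋂ (_ : 1 ≤ t ∧ t < k + 1), ((fun ω : ℕ → ℕ => ω t) ⁻¹' S)ᶜ := by
    ext ω
    simp only [Set.mem_setOf_eq, hitTime_eq_coe_iff, Set.mem_inter_iff, Set.mem_iInter,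
      Set.mem_preimage, Set.mem_compl_iff]
    constructor
    · rintro ⟨-, hS, hmin⟩
      exact ⟨hS, fun t ht => hmin t ht.1 ht.2⟩
    · rintro ⟨hS, hmin⟩
      exact ⟨Nat.succ_le_succ (Nat.zero_le k), hS, fun t h1 h2 => hmin t ⟨h1, h2⟩⟩
  rw [this]
  exact ((measurable_pi_apply (k + 1)) (S.to_countable.measurableSet)).inter
    (MeasurableSet.iInter fun t => MeasurableSet.iInter fun ht =>
      ((measurable_pi_apply t) (S.to_countable.measurableSet)).compl)

include hchain in
lemma ae_start (x : ℕ) : ∀ᵐ ω ∂(Pr x), ω 0 = x := by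
  have hm : MeasurableSet {ω : ℕ → ℕ | ω 0 = x} := by
    have : {ω : ℕ → ℕ | ω 0 = x} = (fun ω : ℕ → ℕ => ω 0) ⁻¹' {x} := by ext; simp
    rw [this]
    exact (measurable_pi_apply 0) MeasurableSet.of_discrete
  exact ae_of_meas_one hm (hchain.start x)

include hchain in
lemma one_step (x : ℕ) (A : Set ℕ) : Pr x {ω | ω 1 ∈ A} = Q x A := by
  have hB : Pr x {ω : ℕ → ℕ | ω 0 = x} = 1 := hchain.start x
  have key := step_lemma hchain x 0 {ω : ℕ → ℕ | ω 0 = x}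
    (by rw [← constSet_zero]; exact constSet_measurable x 0) x (fun ω hω => hω) A
  rw [hB, mul_one] at key
  rw [← key]
  apply measure_congr
  rw [eventuallyEq_set]
  filter_upwards [ae_start hchain x] with ω h0
  simp [h0]

-- valJ for S = {1} starting at 2 : stopPayoff vanishes a.e.
include hchain hQ2 in
lemma payoff_S1 (δ : ℕ → ℝ) (f : ℕ → ℝ) :
    ∫ ω, stopPayoff δ f {1} ω ∂(Pr 2) = 0 := by
  rw [integral_congr_ae (g := fun _ => (0 : ℝ)) ?_, integral_zero]
  filter_upwards [ae_two hchain hQ2] with ω hω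
  have htop : hitTime ({1} : Set ℕ) ω = ⊤ := by
    rw [hitTime_eq_top_iff]
    intro t ht hmem
    rw [hω t] at hmem
    simp at hmem
  simp [stopPayoff, htop]

-- valJ for S = {1, 2} starting at 1 equals 9/8 (if δ 1 = 3/4)
include hchain hQ1 hQ2 in
lemma payoff_S12 (δ : ℕ → ℝ) (hδ_one : δ 1 = 3 / 4) :
    ∫ ω, stopPayoff δ (fun y : ℕ => (y : ℝ)) {1, 2} ω ∂(Pr 1) = 9 / 8 := by
  have hm : ∀ y : ℕ, MeasurableSet {ω : ℕ → ℕ | ω 1 = y} := by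
    intro y
    have : {ω : ℕ → ℕ | ω 1 = y} = (fun ω : ℕ → ℕ => ω 1) ⁻¹' {y} := by ext; simp
    rw [this]
    exact (measurable_pi_apply 1) MeasurableSet.of_discrete
  have hm1 := hm 1
  have hm2 := hm 2
  rw [integral_congr_ae (g := fun ω => Set.indicator {ω : ℕ → ℕ | ω 1 = 1} (fun _ => (3/4 : ℝ)) ω
      + Set.indicator {ω : ℕ → ℕ | ω 1 = 2} (fun _ => (3/2 : ℝ)) ω) ?_]
  · rw [integral_add ((integrable_const _).indicator hm1) ((integrable_const _).indicator hm2),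
      integral_indicator_const _ hm1, integral_indicator_const _ hm2]
    have e1 : Pr 1 {ω : ℕ → ℕ | ω 1 = 1} = 1 / 2 := by
      have : {ω : ℕ → ℕ | ω 1 = 1} = {ω : ℕ → ℕ | ω 1 ∈ ({1} : Set ℕ)} := by ext; simp
      rw [this, one_step hchain, Q1_one hQ1]
    have e2 : Pr 1 {ω : ℕ → ℕ | ω 1 = 2} = 1 / 2 := by
      have : {ω : ℕ → ℕ | ω 1 = 2} = {ω : ℕ → ℕ | ω 1 ∈ ({2} : Set ℕ)} := by ext; simp
      rw [this, one_step hchain, Q1_two hQ1]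
    rw [measureReal_def, measureReal_def, e1, e2]
    norm_num [ENNReal.toReal_div]
  · filter_upwards [ae_one hchain hQ1 hQ2] with ω hω
    obtain ⟨h0, hall⟩ := hω
    have hhit : hitTime ({1, 2} : Set ℕ) ω = ((1 : ℕ) : ℕ∞) := by
      rw [hitTime_eq_coe_iff]
      exact ⟨le_rfl, hall 1, fun t ht1 ht2 => absurd (lt_of_lt_of_le ht2 ht1) (lt_irrefl t)⟩
    have hne : hitTime ({1, 2} : Set ℕ) ω ≠ ⊤ := by rw [hhit]; exact (by simp)
    rcases hall 1 with h1 | h1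
    · simp [stopPayoff, hhit, hδ_one, h1, Set.indicator]
    · rw [Set.mem_singleton_iff] at h1
      simp [stopPayoff, hhit, hδ_one, h1, Set.indicator]
      norm_num

include hchain hQ1 hQ2 in
lemma payoff_S2 (δ : ℕ → ℝ) (hδ_mem : ∀ k, δ k ∈ Set.Icc (0 : ℝ) 1) :
    ∫ ω, stopPayoff δ (fun y : ℕ => (y : ℝ)) {2} ω ∂(Pr 1)
      = ∑' k : ℕ, ((1 / 2 : ℝ≥0∞) ^ (k + 1)).toReal * (2 * δ (k + 1)) := by
  have hpt : ∀ ω : ℕ → ℕ, stopPayoff δ (fun y : ℕ => (y : ℝ)) {2} ω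
      = ∑' k : ℕ, Set.indicator {ω' : ℕ → ℕ | hitTime ({2} : Set ℕ) ω' = ((k + 1 : ℕ) : ℕ∞)}
          (fun _ => 2 * δ (k + 1)) ω := by
    intro ω
    by_cases h : hitTime ({2} : Set ℕ) ω = ⊤
    · rw [stopPayoff, if_pos h]
      symm
      refine (tsum_congr (fun k => ?_)).trans tsum_zero
      apply Set.indicator_of_notMem
      intro hmem
      rw [Set.mem_setOf_eq, h] at hmem
      exact WithTop.top_ne_coe hmem
    · obtain ⟨m, hm0⟩ := WithTop.ne_top_iff_exists.mp h
      have hm : ((m : ℕ) : ℕ∞) = hitTime ({2} : Set ℕ) ω := by exact_mod_cast hm0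
      obtain ⟨h1, hS, -⟩ := (hitTime_eq_coe_iff _ _ _).mp hm.symm
      obtain ⟨j, rfl⟩ : ∃ j, m = j + 1 := ⟨m - 1, by omega⟩
      rw [stopPayoff, if_neg h, ← hm]
      simp only [ENat.toNat_coe]
      rw [Set.mem_singleton_iff.mp hS]
      rw [tsum_eq_single j ?_]
      · rw [Set.indicator_of_mem
          (show ω ∈ {ω' : ℕ → ℕ | hitTime ({2} : Set ℕ) ω' = ((j + 1 : ℕ) : ℕ∞)} from hm.symm)]
        push_cast
        ring
      · intro k hk
        apply Set.indicator_of_notMem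
        intro hmem
        rw [Set.mem_setOf_eq] at hmem
        rw [hmem] at hm
        have : j + 1 = k + 1 := by exact_mod_cast hm
        exact hk (by omega)
  rw [integral_congr_ae (g := fun ω => ∑' k : ℕ,
      Set.indicator {ω' : ℕ → ℕ | hitTime ({2} : Set ℕ) ω' = ((k + 1 : ℕ) : ℕ∞)}
        (fun _ => 2 * δ (k + 1)) ω) (ae_of_all _ hpt)]
  rw [integral_tsum (fun k =>
      (stronglyMeasurable_const.indicator (measurableSet_hitEq {2} k)).aestronglyMeasurable) ?_]
  · refine tsum_congr fun k => ?_
    rw [integral_indicator_const _ (measurableSet_hitEq {2} k),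
      measureReal_def, hit_measure hchain hQ1 hQ2 k, smul_eq_mul]
  · have hb : ∀ k : ℕ, (∫⁻ ω, ‖Set.indicator
        {ω' : ℕ → ℕ | hitTime ({2} : Set ℕ) ω' = ((k + 1 : ℕ) : ℕ∞)}
        (fun _ => 2 * δ (k + 1)) ω‖₊ ∂(Pr 1)) ≤ 2 * (1 / 2 : ℝ≥0∞) ^ (k + 1) := by
      intro k
      have heq : ∀ ω : ℕ → ℕ, (‖Set.indicator
          {ω' : ℕ → ℕ | hitTime ({2} : Set ℕ) ω' = ((k + 1 : ℕ) : ℕ∞)}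
          (fun _ => 2 * δ (k + 1)) ω‖₊ : ℝ≥0∞) = Set.indicator
          {ω' : ℕ → ℕ | hitTime ({2} : Set ℕ) ω' = ((k + 1 : ℕ) : ℕ∞)}
          (fun _ => (‖2 * δ (k + 1)‖₊ : ℝ≥0∞)) ω := by
        intro ω
        rw [Set.indicator_apply, Set.indicator_apply]
        split_ifs <;> simp
      rw [lintegral_congr heq, lintegral_indicator_const (measurableSet_hitEq {2} k),
        hit_measure hchain hQ1 hQ2 k]
      apply mul_le_mul_left
      have habs : ‖2 * δ (k + 1)‖₊ ≤ (2 : NNReal) := by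
        have h1 := (hδ_mem (k + 1)).1
        have h2 := (hδ_mem (k + 1)).2
        rw [← NNReal.coe_le_coe, coe_nnnorm, Real.norm_eq_abs,
          abs_of_nonneg (by linarith)]
        norm_num
        linarith
      calc (‖2 * δ (k + 1)‖₊ : ℝ≥0∞) ≤ ((2 : NNReal) : ℝ≥0∞) :=
            ENNReal.coe_le_coe.mpr habs
        _ = 2 := by simp
    refine ne_top_of_le_ne_top ?_ (ENNReal.tsum_le_tsum hb)
    rw [ENNReal.tsum_mul_left]
    apply ENNReal.mul_ne_top (by simp)
    have hle : ∑' k : ℕ, (1 / 2 : ℝ≥0∞) ^ (k + 1) ≤ ∑' k : ℕ, (1 / 2 : ℝ≥0∞) ^ k :=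
      ENNReal.tsum_le_tsum fun k =>
        pow_le_pow_of_le_one zero_le (by norm_num) (Nat.le_succ k)
    refine ne_top_of_le_ne_top ?_ hle
    rw [ENNReal.tsum_geometric]
    simp [ENNReal.sub_half]

end Chain

/-- For the two-state chain on `{1, 2}` with `f(x) = x` and `δ(1) = 3/4`, if the
discount function decays fast enough (`3/4 + 2 Σ_{k≥2} (1/2)^k δ(k) < 1`), then no
subset `S ⊆ {1,2}` is an equilibrium. -/
theorem no_equilibrium_example
    (Pr : Kernel ℕ (ℕ → ℕ)) [IsMarkovKernel Pr] (Q : Kernel ℕ ℕ) [IsMarkovKernel Q]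
    (hchain : IsMarkovChainLaw Pr Q)
    (hQ1 : Q 1 = (1 / 2 : ℝ≥0∞) • Measure.dirac 1 + (1 / 2 : ℝ≥0∞) • Measure.dirac 2)
    (hQ2 : Q 2 = Measure.dirac 2)
    (δ : ℕ → ℝ) (hδ_mem : ∀ k, δ k ∈ Set.Icc (0 : ℝ) 1) (hδ_anti : StrictAnti δ)
    (hδ_zero : δ 0 = 1) (hδ_one : δ 1 = 3 / 4) (hδ_lim : Tendsto δ atTop (𝓝 0))
    (hδ_fast : (3 / 4 : ℝ) + 2 * ∑' k : ℕ, (1 / 2 : ℝ) ^ (k + 2) * δ (k + 2) < 1) :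
    ∀ S : Set ℕ, S ⊆ {1, 2} →
      ¬ ({x ∈ ({1, 2} : Set ℕ) | valJ Pr δ (fun y => (y : ℝ)) S x ≤ (x : ℝ)} = S) := by
  intro S hSsub heq
  have hone : ((1 : ℕ) : ℝ) = 1 := Nat.cast_one
  by_cases h1 : 1 ∈ S <;> by_cases h2 : 2 ∈ S
  · -- S = {1, 2}
    have hSeq : S = ({1, 2} : Set ℕ) := by
      refine Set.Subset.antisymm hSsub ?_
      rintro x (rfl | rfl) <;> assumption
    subst hSeq
    rw [← heq] at h1
    have hval : valJ Pr δ (fun y => (y : ℝ)) {1, 2} 1 = 9 / 8 :=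
      payoff_S12 hchain hQ1 hQ2 δ hδ_one
    have := h1.2
    rw [hval, hone] at this
    linarith
  · -- S = {1}
    have hSeq : S = ({1} : Set ℕ) := by
      ext x
      constructor
      · intro hx
        rcases hSsub hx with rfl | rfl
        · rfl
        · exact absurd hx h2
      · rintro rfl; exact h1
    subst hSeq
    have hmem : (2 : ℕ) ∈ {x ∈ ({1, 2} : Set ℕ) | valJ Pr δ (fun y => (y : ℝ)) {1} x ≤ (x : ℝ)} := by
      refine ⟨by simp, ?_⟩
      have hval : valJ Pr δ (fun y => (y : ℝ)) {1} 2 = 0 := payoff_S1 hchain hQ2 δ _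
      rw [hval]
      norm_num
    rw [heq] at hmem
    exact absurd (Set.mem_singleton_iff.mp hmem) (by norm_num)
  · -- S = {2}
    have hSeq : S = ({2} : Set ℕ) := by
      ext x
      constructor
      · intro hx
        rcases hSsub hx with rfl | rfl
        · exact absurd hx h1
        · rfl
      · rintro rfl; exact h2
    subst hSeq
    have hval : valJ Pr δ (fun y => (y : ℝ)) {2} 1
        = ∑' k : ℕ, ((1 / 2 : ℝ≥0∞) ^ (k + 1)).toReal * (2 * δ (k + 1)) :=
      payoff_S2 hchain hQ1 hQ2 δ hδ_mem
    have htr : ∀ k : ℕ, ((1 / 2 : ℝ≥0∞) ^ (k + 1)).toReal = (1 / 2 : ℝ) ^ (k + 1) := by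
      intro k
      rw [ENNReal.toReal_pow]
      norm_num
    have hval2 : valJ Pr δ (fun y => (y : ℝ)) {2} 1
        = ∑' k : ℕ, (1 / 2 : ℝ) ^ (k + 1) * (2 * δ (k + 1)) := by
      rw [hval]
      exact tsum_congr fun k => by rw [htr k]
    set g : ℕ → ℝ := fun k => (1 / 2 : ℝ) ^ (k + 1) * (2 * δ (k + 1)) with hg
    have hgsum : Summable g := by
      apply Summable.of_nonneg_of_le (fun k => ?_) (fun k => ?_)
        (summable_geometric_of_lt_one (by norm_num) (by norm_num) : Summable fun k : ℕ => (1 / 2 : ℝ) ^ k)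
      · have := (hδ_mem (k + 1)).1
        positivity
      · have h01 := (hδ_mem (k + 1)).1
        have h11 := (hδ_mem (k + 1)).2
        have hp : (0 : ℝ) < (1 / 2 : ℝ) ^ (k + 1) := by positivity
        calc g k ≤ (1 / 2 : ℝ) ^ (k + 1) * 2 := by
              rw [hg]
              have : 2 * δ (k + 1) ≤ 2 := by linarith
              nlinarith
          _ = (1 / 2 : ℝ) ^ k := by
              rw [pow_succ]
              ring
    have hsplit : ∑' k, g k = g 0 + ∑' k, g (k + 1) := Summable.tsum_eq_zero_add hgsum
    have hg0 : g 0 = 3 / 4 := by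
      norm_num [hg, hδ_one]
    have htail : ∑' k, g (k + 1) = 2 * ∑' k : ℕ, (1 / 2 : ℝ) ^ (k + 2) * δ (k + 2) := by
      rw [← tsum_mul_left]
      exact tsum_congr fun k => by rw [hg]; ring
    have hlt : valJ Pr δ (fun y => (y : ℝ)) {2} 1 < 1 := by
      rw [hval2, hsplit, hg0, htail]
      exact hδ_fast
    have hmem : (1 : ℕ) ∈ {x ∈ ({1, 2} : Set ℕ) | valJ Pr δ (fun y => (y : ℝ)) {2} x ≤ (x : ℝ)} := by
      refine ⟨by simp, ?_⟩
      rw [hone]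
      exact le_of_lt hlt
    rw [heq] at hmem
    exact absurd (Set.mem_singleton_iff.mp hmem) (by norm_num)
  · -- S = ∅
    have hSeq : S = (∅ : Set ℕ) := by
      ext x
      simp only [Set.mem_empty_iff_false, iff_false]
      intro hx
      rcases hSsub hx with rfl | rfl
      · exact h1 hx
      · exact h2 hx
    subst hSeq
    have hzero : ∀ ω : ℕ → ℕ, stopPayoff δ (fun y : ℕ => (y : ℝ)) ∅ ω = 0 := by
      intro ω
      have : hitTime (∅ : Set ℕ) ω = ⊤ := by
        rw [hitTime_eq_top_iff]
        intro t ht hmem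
        exact hmem
      simp [stopPayoff, this]
    have hmem : (1 : ℕ) ∈ {x ∈ ({1, 2} : Set ℕ) | valJ Pr δ (fun y => (y : ℝ)) ∅ x ≤ (x : ℝ)} := by
      refine ⟨by simp, ?_⟩
      have : valJ Pr δ (fun y => (y : ℝ)) ∅ 1 = 0 := by
        rw [valJ, integral_congr_ae (ae_of_all _ hzero), integral_zero]
      rw [this, hone]
      norm_num
    rw [heq] at hmem
    exact hmem


end
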